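/- For each σ ∈ (0,1), set τ = σ²·e^{−σ}, b = (1−σ)·e^{−σ}, and z₀ = −σ/τ. Then b ∈ (0,1), τ > 0, z₀ < 0, and z₀ is a double root of the equation −z = 1/(e^{zτ} − b), namely: −z₀ = 1/(e^{z₀·τ} − b) and 1 = τ·e^{z₀·τ}/(e^{z₀·τ} − b)². -/

import Mathlib

/-- For `σ ∈ (0,1)`, setting `τ = σ²e^{−σ}`, `b = (1−σ)e^{−σ}`,
`z₀ = −σ/τ`, one has `b ∈ (0,1)`, `τ > 0`, `z₀ < 0`, and `z₀` is a double root of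
`−z = 1/(e^{zτ} − b)`:  `−z₀ = 1/(e^{z₀τ} − b)` and `1 = τ·e^{z₀τ}/(e^{z₀τ} − b)²`. -/
theorem parametric_double_root (σ : ℝ) (hσ : σ ∈ Set.Ioo (0 : ℝ) 1) :
    let τ : ℝ := σ ^ 2 * Real.exp (-σ)
    let b : ℝ := (1 - σ) * Real.exp (-σ)
    let z₀ : ℝ := -σ / τ
    b ∈ Set.Ioo (0 : ℝ) 1 ∧ 0 < τ ∧ z₀ < 0 ∧
      -z₀ = 1 / (Real.exp (z₀ * τ) - b) ∧
      1 = τ * Real.exp (z₀ * τ) / (Real.exp (z₀ * τ) - b) ^ 2 := by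
  obtain ⟨h0, h1⟩ := hσ
  intro τ b z₀
  have hexp : (0 : ℝ) < Real.exp (-σ) := Real.exp_pos _
  have hexp1 : Real.exp (-σ) < 1 := by
    rw [Real.exp_lt_one_iff]; linarith
  have hτ : 0 < τ := by positivity
  have hτne : τ ≠ 0 := ne_of_gt hτ
  have hz : z₀ * τ = -σ := by
    show -σ / τ * τ = -σ
    field_simp
  have hE : Real.exp (z₀ * τ) = Real.exp (-σ) := by rw [hz]
  have hb : Real.exp (z₀ * τ) - b = σ * Real.exp (-σ) := by
    show Real.exp (z₀ * τ) - (1 - σ) * Real.exp (-σ) = _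
    rw [hE]; ring
  refine ⟨⟨mul_pos (by linarith) hexp, ?_⟩, hτ, ?_, ?_, ?_⟩
  · nlinarith
  · show -σ / τ < 0
    apply div_neg_of_neg_of_pos (by linarith) hτ
  · show -(-σ / τ) = _
    rw [hb]
    show -(-σ / (σ ^ 2 * Real.exp (-σ))) = _
    rw [eq_div_iff (by positivity)]
    field_simp
  · rw [hb, hE]
    show 1 = σ ^ 2 * Real.exp (-σ) * Real.exp (-σ) / (σ * Real.exp (-σ)) ^ 2
    rw [eq_div_iff (by positivity)]
    ring
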